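/- Let n ≥ 2 be an integer, m > 0, m₀ ≥ 0, α = (n·m)^{−1/2}, and ωⱼ = e^{−2π√−1·j/n} ∈ ℂ for j = 1, …, n. Let w₀ ∈ ℂ with w₀ ≠ 0 and w₀ ≠ ωⱼ for all j. Consider the N = n + 2 body positions c₁ = α·ω₁, …, c_n = α·ω_n, c_{n+1} = 0, c_{n+2} = α·w₀ with masses m₁ = ⋯ = m_n = m, m_{n+1} = m₀, and let μ = ∑_{1 ≤ i < j ≤ n+1} mᵢ·mⱼ/|cᵢ − cⱼ|, which is assumed positive. Identify each cᵢ with a point aᵢ ∈ ℝ² and define D = I₂ − (1/μ)(∑_{i=1}^{n+1} mᵢ/|aᵢ − a_{n+2}|³)·I₂ + (3/μ)·∑_{i=1}^{n+1} mᵢ (aᵢ − a_{n+2})(aᵢ − a_{n+2})ᵀ/|aᵢ − a_{n+2}|⁵. Set A = (m/2)·∑_{j=1}^{n} 1/|w₀ − ωⱼ|³ + m₀/(2|w₀|³) ∈ ℝ and B = (3m/2)·∑_{j=1}^{n} (w₀ − ωⱼ)²/|w₀ − ωⱼ|⁵ + (3m₀/2)·w₀²/|w₀|⁵ ∈ ℂ.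 Then D = (1 + A/(μα³))·I₂ + (1/(μα³))·ψ(B), where ψ(x + √−1·y) = [[x, y], [y, −x]]; consequently the eigenvalues of D are λ₃ = 1 + A/(μα³) + |B|/(μα³) and λ₄ = 1 + A/(μα³) − |B|/(μα³). -/

import Mathlib

open Finset Polynomial


/-- The outer product `v vᵀ` of a vector `v ∈ ℝ²` with itself, as a 2×2 matrix. -/
noncomputable def outer (v : EuclideanSpace ℝ (Fin 2)) : Matrix (Fin 2) (Fin 2) ℝ :=
  Matrix.of fun p q => v p * v q

/-- The point of `ℝ²` identified with a complex number. -/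
noncomputable def toE2 (w : ℂ) : EuclideanSpace ℝ (Fin 2) :=
  (WithLp.equiv 2 (Fin 2 → ℝ)).symm ![w.re, w.im]

/-- For `w = x + √−1·y`, the symmetric traceless 2×2 matrix `ψ(w) = [[x, y], [y, −x]]`. -/
noncomputable def psi (w : ℂ) : Matrix (Fin 2) (Fin 2) ℝ :=
  !![w.re, w.im; w.im, -w.re]

lemma toE2_sub (z w : ℂ) : toE2 z - toE2 w = toE2 (z - w) := by
  ext i; fin_cases i <;> simp [toE2]

lemma norm_toE2 (z : ℂ) : ‖toE2 z‖ = ‖z‖ := by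
  rw [EuclideanSpace.norm_eq, Complex.norm_def, Complex.normSq_apply]
  simp [toE2, Fin.sum_univ_two, Real.norm_eq_abs, sq_abs]
  ring_nf

lemma outer_toE2 (z : ℂ) : outer (toE2 z)
    = ((‖z‖) ^ 2 / 2) • (1 : Matrix (Fin 2) (Fin 2) ℝ) + (1 / 2 : ℝ) • psi (z ^ 2) := by
  ext i j
  fin_cases i <;> fin_cases j <;>
    simp [outer, toE2, psi, Matrix.one_apply, Complex.sq_norm, Complex.normSq_apply,
      Complex.norm_mul_self_eq_normSq, pow_two, Complex.mul_re, Complex.mul_im] <;> ring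

lemma psi_smul (r : ℝ) (w : ℂ) : psi ((r : ℂ) * w) = r • psi w := by
  ext i j
  fin_cases i <;> fin_cases j <;> simp [psi, Complex.mul_re, Complex.mul_im]

lemma psi_sum {ι : Type*} (s : Finset ι) (f : ι → ℂ) :
    psi (∑ i ∈ s, f i) = ∑ i ∈ s, psi (f i) := by
  ext p q
  fin_cases p <;> fin_cases q <;>
    simp [psi, Matrix.sum_apply, Complex.re_sum, Complex.im_sum]

lemma charpoly_fin_two' (M : Matrix (Fin 2) (Fin 2) ℝ) :
    M.charpoly = Polynomial.X ^ 2 - Polynomial.C M.trace * Polynomial.X + Polynomial.C M.det := by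
  rw [Matrix.charpoly, Matrix.det_fin_two, Matrix.trace_fin_two, Matrix.det_fin_two]
  simp [Matrix.charmatrix_apply_eq, Matrix.charmatrix_apply_ne]
  ring

lemma sum_fin_succ_icc {M : Type*} [AddCommMonoid M] (n : ℕ) (f : Fin (n + 1) → M) (g : ℕ → M)
    (h : ∀ i : Fin (n + 1), (i : ℕ) < n → f i = g ((i : ℕ) + 1)) :
    ∑ i, f i = (∑ j ∈ Finset.Icc 1 n, g j) + f (Fin.last n) := by
  rw [Fin.sum_univ_castSucc]
  congr 1
  rw [← Finset.Ico_add_one_right_eq_Icc, Finset.sum_Ico_eq_sum_range]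
  rw [show n + 1 - 1 = n from rfl]
  have : ∀ i : Fin n, f i.castSucc = g (1 + (i : ℕ)) := by
    intro i
    have := h i.castSucc (by simpa using i.isLt)
    simpa [add_comm] using this
  simp only [this]
  exact Fin.sum_univ_eq_sum_range (fun k => g (1 + k)) n

/-- for the `(1+n)`-gon restricted problem (n bodies of mass `m` at the
vertices `α·ωⱼ` of a regular n-gon, a body of mass `m₀` at the center, a massless body
at `α·w₀`), the central-configuration matrix satisfies
`D = (1 + A/(μα³))·I₂ + (1/(μα³))·ψ(B)`, and consequently its eigenvalues are
`λ₃ = 1 + A/(μα³) + |B|/(μα³)` and `λ₄ = 1 + A/(μα³) − |B|/(μα³)`. -/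
theorem statement14 (n : ℕ) (hn : 2 ≤ n) (m m₀ : ℝ) (hm : 0 < m) (hm₀ : 0 ≤ m₀)
    (α : ℝ) (hα : α = ((n : ℝ) * m) ^ (-(1 : ℝ) / 2))
    (ω : ℕ → ℂ)
    (hω : ∀ j, ω j = Complex.exp (-(2 * Real.pi * j / n) * Complex.I))
    (w₀ : ℂ) (hw₀ : w₀ ≠ 0) (hw₀' : ∀ j ∈ Finset.Icc 1 n, w₀ ≠ ω j)
    (mass : Fin (n + 1) → ℝ)
    (hmass : ∀ i : Fin (n + 1), (i : ℕ) < n → mass i = m)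
    (hmass0 : ∀ i : Fin (n + 1), (i : ℕ) = n → mass i = m₀)
    (c : Fin (n + 1) → ℂ)
    (hc : ∀ i : Fin (n + 1), (i : ℕ) < n → c i = α * ω ((i : ℕ) + 1))
    (hc0 : ∀ i : Fin (n + 1), (i : ℕ) = n → c i = 0)
    (μ : ℝ)
    (hμdef : μ = ∑ i, ∑ j,
        if i < j then mass i * mass j / ‖c i - c j‖ else 0)
    (hμpos : 0 < μ)
    (a : Fin (n + 1) → EuclideanSpace ℝ (Fin 2)) (aN : EuclideanSpace ℝ (Fin 2))
    (ha : ∀ i, a i = toE2 (c i)) (haN : aN = toE2 (α * w₀))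
    (D : Matrix (Fin 2) (Fin 2) ℝ)
    (hD : D = 1 - ((1 / μ) * ∑ i, mass i / ‖a i - aN‖ ^ 3) • (1 : Matrix (Fin 2) (Fin 2) ℝ)
        + (3 / μ) • ∑ i, (mass i / ‖a i - aN‖ ^ 5) • outer (a i - aN))
    (A : ℝ)
    (hA : A = (m / 2) * (∑ j ∈ Finset.Icc 1 n, 1 / ‖w₀ - ω j‖ ^ 3)
      + m₀ / (2 * ‖w₀‖ ^ 3))
    (B : ℂ)
    (hB : B = (3 * m / 2 : ℝ) *
        (∑ j ∈ Finset.Icc 1 n, (w₀ - ω j) ^ 2 / ((‖w₀ - ω j‖ : ℝ) : ℂ) ^ 5)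
      + (3 * m₀ / 2 : ℝ) * w₀ ^ 2 / ((‖w₀‖ : ℝ) : ℂ) ^ 5) :
    D = (1 + A / (μ * α ^ 3)) • (1 : Matrix (Fin 2) (Fin 2) ℝ)
        + (1 / (μ * α ^ 3)) • psi B ∧
      D.charpoly =
        (Polynomial.X - Polynomial.C (1 + A / (μ * α ^ 3) + ‖B‖ / (μ * α ^ 3))) *
          (Polynomial.X - Polynomial.C (1 + A / (μ * α ^ 3) - ‖B‖ / (μ * α ^ 3))) := by
  have hn0 : (0 : ℝ) < n := by exact_mod_cast (by omega : 0 < n)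
  have hα0 : 0 < α := by rw [hα]; exact Real.rpow_pos_of_pos (mul_pos hn0 hm) _
  have hαne : α ≠ 0 := ne_of_gt hα0
  have hαC : (α : ℂ) ≠ 0 := Complex.ofReal_ne_zero.mpr hαne
  have hμne : μ ≠ 0 := ne_of_gt hμpos
  have haw : ‖w₀‖ ≠ 0 := by simpa using hw₀
  set z : Fin (n + 1) → ℂ := fun i => c i - α * w₀ with hzdef
  have hzn : ∀ i : Fin (n + 1), (i : ℕ) < n → z i = (α : ℂ) * (ω ((i : ℕ) + 1) - w₀) := by
    intro i hi; simp only [hzdef, hc i hi]; ring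
  have hωne : ∀ i : Fin (n + 1), (i : ℕ) < n → ω ((i : ℕ) + 1) - w₀ ≠ 0 := by
    intro i hi
    have h1 := hw₀' ((i : ℕ) + 1) (by simp [Finset.mem_Icc]; omega)
    exact sub_ne_zero.mpr (Ne.symm h1)
  have hzlast : ∀ i : Fin (n + 1), (i : ℕ) = n → z i = -((α : ℂ) * w₀) := by
    intro i hi; simp [hzdef, hc0 i hi]
  have hzne : ∀ i, z i ≠ 0 := by
    intro i
    rcases (by omega : (i : ℕ) < n ∨ (i : ℕ) = n) with hi | hi
    · rw [hzn i hi]; exact mul_ne_zero hαC (hωne i hi)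
    · rw [hzlast i hi]; simpa using mul_ne_zero hαC hw₀
  have hrne : ∀ i, ‖z i‖ ≠ 0 := fun i => by simpa using hzne i
  have hsub : ∀ i, a i - aN = toE2 (z i) := by
    intro i; rw [ha, haN, toE2_sub]
  have habsn : ∀ i : Fin (n + 1), (i : ℕ) < n →
      ‖z i‖ = α * ‖w₀ - ω ((i : ℕ) + 1)‖ := by
    intro i hi
    rw [hzn i hi, norm_mul, Complex.norm_real, Real.norm_eq_abs, abs_of_pos hα0, norm_sub_rev]
  have habslast : ∀ i : Fin (n + 1), (i : ℕ) = n →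
      ‖z i‖ = α * ‖w₀‖ := by
    intro i hi
    rw [hzlast i hi, norm_neg, norm_mul, Complex.norm_real, Real.norm_eq_abs, abs_of_pos hα0]
  -- the trace-type sum
  have hT : (∑ i, mass i / ‖z i‖ ^ 3) = 2 * A / α ^ 3 := by
    have hpt : ∀ i : Fin (n + 1), (i : ℕ) < n → mass i / ‖z i‖ ^ 3
        = m * (1 / ‖w₀ - ω ((i : ℕ) + 1)‖ ^ 3) / α ^ 3 := by
      intro i hi
      have hx : ‖w₀ - ω ((i : ℕ) + 1)‖ ≠ 0 := by
        rw [← norm_sub_rev]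
        simpa [sub_ne_zero] using hωne i hi
      rw [hmass i hi, habsn i hi]
      rw [mul_pow]
      ring
    rw [sum_fin_succ_icc n (fun i => mass i / ‖z i‖ ^ 3)
        (fun j => m * (1 / ‖w₀ - ω j‖ ^ 3) / α ^ 3) hpt]
    rw [hmass0 (Fin.last n) (by simp), habslast (Fin.last n) (by simp), hA,
      ← Finset.sum_div, ← Finset.mul_sum]
    field_simp
  -- the psi-type sum
  have hBW : B = ((3 * α ^ 3 : ℝ) : ℂ)
      * ∑ i, ((mass i / (2 * ‖z i‖ ^ 5) : ℝ) : ℂ) * z i ^ 2 := by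
    rw [Finset.mul_sum]
    have hpt : ∀ i : Fin (n + 1), (i : ℕ) < n →
        ((3 * α ^ 3 : ℝ) : ℂ) * (((mass i / (2 * ‖z i‖ ^ 5) : ℝ) : ℂ) * z i ^ 2)
        = ((3 * m / 2 : ℝ) : ℂ)
            * ((w₀ - ω ((i : ℕ) + 1)) ^ 2 / ((‖w₀ - ω ((i : ℕ) + 1)‖ : ℝ) : ℂ) ^ 5) := by
      intro i hi
      rw [hmass i hi, habsn i hi, hzn i hi]
      have hx : ‖w₀ - ω ((i : ℕ) + 1)‖ ≠ 0 := by
        rw [← norm_sub_rev]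
        simpa [sub_ne_zero] using hωne i hi
      have hxC : ((‖w₀ - ω ((i : ℕ) + 1)‖ : ℝ) : ℂ) ≠ 0 := Complex.ofReal_ne_zero.mpr hx
      push_cast
      field_simp
      ring
    rw [sum_fin_succ_icc n
        (fun i => ((3 * α ^ 3 : ℝ) : ℂ) * (((mass i / (2 * ‖z i‖ ^ 5) : ℝ) : ℂ) * z i ^ 2))
        (fun j => ((3 * m / 2 : ℝ) : ℂ) * ((w₀ - ω j) ^ 2 / ((‖w₀ - ω j‖ : ℝ) : ℂ) ^ 5))
        hpt]
    rw [hmass0 (Fin.last n) (by simp), habslast (Fin.last n) (by simp),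
      hzlast (Fin.last n) (by simp), hB, ← Finset.mul_sum]
    have hawC : ((‖w₀‖ : ℝ) : ℂ) ≠ 0 := Complex.ofReal_ne_zero.mpr haw
    push_cast
    field_simp
  -- pointwise decomposition of the outer-product terms
  have houter : ∀ i, (mass i / ‖z i‖ ^ 5) • outer (toE2 (z i))
      = (mass i / ‖z i‖ ^ 3 / 2) • (1 : Matrix (Fin 2) (Fin 2) ℝ)
        + psi (((mass i / (2 * ‖z i‖ ^ 5) : ℝ) : ℂ) * z i ^ 2) := by
    intro i
    rw [outer_toE2, smul_add, smul_smul, smul_smul, psi_smul]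
    have e1 : mass i / ‖z i‖ ^ 5 * (‖z i‖ ^ 2 / 2)
        = mass i / ‖z i‖ ^ 3 / 2 := by
      field_simp [hrne i]
    have e2 : mass i / ‖z i‖ ^ 5 * (1 / 2)
        = mass i / (2 * ‖z i‖ ^ 5) := by ring
    rw [e1, e2]
  have hsum : (∑ i, (mass i / ‖z i‖ ^ 5) • outer (toE2 (z i)))
      = ((∑ i, mass i / ‖z i‖ ^ 3) / 2) • (1 : Matrix (Fin 2) (Fin 2) ℝ)
        + psi (∑ i, ((mass i / (2 * ‖z i‖ ^ 5) : ℝ) : ℂ) * z i ^ 2) := by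
    rw [psi_sum, Finset.sum_congr rfl (fun i _ => houter i), Finset.sum_add_distrib,
      ← Finset.sum_smul, ← Finset.sum_div]
  have hmain : D = (1 + A / (μ * α ^ 3)) • (1 : Matrix (Fin 2) (Fin 2) ℝ)
      + (1 / (μ * α ^ 3)) • psi B := by
    rw [hD]
    simp only [hsub, norm_toE2]
    rw [hsum, hBW, psi_smul, smul_smul]
    have e2 : 1 / (μ * α ^ 3) * (3 * α ^ 3) = 3 / μ := by field_simp
    have e1 : 1 + A / (μ * α ^ 3)
        = 1 - 1 / μ * (∑ i, mass i / ‖z i‖ ^ 3)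
          + 3 / μ * ((∑ i, mass i / ‖z i‖ ^ 3) / 2) := by
      rw [hT]; field_simp; ring
    rw [e2, e1]
    module
  refine ⟨hmain, ?_⟩
  have hM : D = !![1 + A / (μ * α ^ 3) + B.re / (μ * α ^ 3), B.im / (μ * α ^ 3);
      B.im / (μ * α ^ 3), 1 + A / (μ * α ^ 3) - B.re / (μ * α ^ 3)] := by
    rw [hmain]
    ext i j
    fin_cases i <;> fin_cases j <;> simp [psi, Matrix.one_apply] <;> ring
  rw [hM, charpoly_fin_two', Matrix.trace_fin_two_of, Matrix.det_fin_two_of]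
  have expand : ∀ x y : ℝ, (Polynomial.X - Polynomial.C x) * (Polynomial.X - Polynomial.C y)
      = Polynomial.X ^ 2 - Polynomial.C (x + y) * Polynomial.X + Polynomial.C (x * y) := by
    intro x y; rw [Polynomial.C_add, Polynomial.C_mul]; ring
  rw [expand]
  have habs2 : ‖B‖ ^ 2 = B.re ^ 2 + B.im ^ 2 := by
    rw [Complex.sq_norm, Complex.normSq_apply]; ring
  congr 2
  · ring
  · linear_combination ((1 / (μ * α ^ 3)) ^ 2 : ℝ) * habs2
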